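/- (Kakeya–Hornich, Cantor criterion) Let ∑ z_n be a convergent series of positive reals with z_n ≥ z_{n+1} for all n. If z_n > ∑_{k>n} z_k for all but finitely many n, then the achievement set E(z_n) is homeomorphic to the Cantor set. -/

import Mathlib

open Set Finset


/-- The achievement set (set of all subsums) of the series `∑_{n ≥ 1} z n`. -/
def subsums (z : ℕ → ℝ) : Set ℝ :=
  {y | ∃ c : ℕ → Bool, HasSum (fun n => if c (n + 1) then z (n + 1) else 0) y}

section KakeyaAux

open Topology Filter


/-- A "Cantor-like" subset of `ℝ`. -/
def GoodSet (P : Set ℝ) : Prop :=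
  P.Nonempty ∧ IsCompact P ∧ Perfect P ∧ interior P = ∅

lemma GoodSet.inf_lt_sup {P : Set ℝ} (h : GoodSet P) : sInf P < sSup P := by
  obtain ⟨hne, hc, hp, -⟩ := h
  rcases lt_or_ge (sInf P) (sSup P) with h' | h'
  · exact h'
  · exfalso
    have hIle : ∀ x ∈ P, sInf P ≤ x := fun x hx => csInf_le hc.bddBelow hx
    have hSle : ∀ x ∈ P, x ≤ sSup P := fun x hx => le_csSup hc.bddAbove hx
    have hsingle : P = {sInf P} := by
      apply Set.eq_singleton_iff_nonempty_unique_mem.2 ⟨hne, ?_⟩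
      intro x hx
      exact le_antisymm (le_trans (hSle x hx) h') (hIle x hx)
    have hacc := hp.acc _ (hc.sInf_mem hne)
    rw [accPt_iff_nhds] at hacc
    obtain ⟨y, ⟨-, hyP⟩, hyne⟩ := hacc Set.univ univ_mem
    rw [hsingle] at hyP
    exact hyne hyP

lemma goodSet_split {P : Set ℝ} (h : GoodSet P) :
    ∃ p : Set ℝ × Set ℝ, p.1 ∪ p.2 = P ∧ Disjoint p.1 p.2 ∧ GoodSet p.1 ∧ GoodSet p.2 ∧
      Metric.diam p.1 ≤ 2/3 * Metric.diam P ∧ Metric.diam p.2 ≤ 2/3 * Metric.diam P := by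
  have hab : sInf P < sSup P := h.inf_lt_sup
  obtain ⟨hne, hc, hp, hi⟩ := h
  set a := sInf P with ha
  set b := sSup P with hb
  have haP : a ∈ P := hc.sInf_mem hne
  have hbP : b ∈ P := hc.sSup_mem hne
  set d := b - a with hd
  have hd0 : 0 < d := by simp only [hd]; linarith
  -- find a point not in P in the middle third
  have hmid : ∃ x, x ∈ Set.Ioo (a + d/3) (a + 2*d/3) ∧ x ∉ P := by
    by_contra hcon
    push_neg at hcon
    have h2 : Set.Ioo (a + d/3) (a + 2*d/3) ⊆ interior P := interior_maximal hcon isOpen_Ioo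
    rw [hi, Set.subset_empty_iff, Set.Ioo_eq_empty_iff] at h2
    exact h2 (by linarith)
  obtain ⟨x, ⟨hx1, hx2⟩, hxP⟩ := hmid
  have hax : a < x := by linarith
  have hxb : x < b := by linarith
  set u := sSup (P ∩ Set.Icc a x) with hu
  set v := sInf (P ∩ Set.Icc x b) with hv
  have hQc : IsCompact (P ∩ Set.Icc a x) := hc.inter_right isClosed_Icc
  have hRc : IsCompact (P ∩ Set.Icc x b) := hc.inter_right isClosed_Icc
  have hQne : (P ∩ Set.Icc a x).Nonempty := ⟨a, haP, le_refl _, hax.le⟩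
  have hRne : (P ∩ Set.Icc x b).Nonempty := ⟨b, hbP, hxb.le, le_refl _⟩
  have huMem : u ∈ P ∩ Set.Icc a x := hQc.sSup_mem hQne
  have hvMem : v ∈ P ∩ Set.Icc x b := hRc.sInf_mem hRne
  have hux : u < x := lt_of_le_of_ne huMem.2.2 (fun he => hxP (he ▸ huMem.1))
  have hxv : x < v :=
    lt_of_le_of_ne hvMem.2.1 (fun he => hxP (by rw [he]; exact hvMem.1))
  refine ⟨(P ∩ Set.Icc a u, P ∩ Set.Icc v b), ?_, ?_, ?_, ?_, ?_, ?_⟩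
  · -- union
    apply Set.Subset.antisymm
    · exact Set.union_subset Set.inter_subset_left Set.inter_subset_left
    · intro p hpP
      have hpa : a ≤ p := csInf_le hc.bddBelow hpP
      have hpb : p ≤ b := le_csSup hc.bddAbove hpP
      rcases le_or_gt p x with hpx | hpx
      · exact Or.inl ⟨hpP, hpa, le_csSup (hc.bddAbove.mono Set.inter_subset_left) ⟨hpP, hpa, hpx⟩⟩
      · exact Or.inr ⟨hpP, csInf_le (hc.bddBelow.mono Set.inter_subset_left) ⟨hpP, hpx.le, hpb⟩, hpb⟩
  · -- disjoint
    rw [Set.disjoint_left]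
    rintro p ⟨-, -, hpu⟩ ⟨-, hvp, -⟩
    have : v ≤ u := le_trans hvp hpu
    exact absurd (lt_trans hux hxv) (not_lt.2 this)
  · -- GoodSet left
    refine ⟨⟨a, haP, le_refl _, le_csSup (hc.bddAbove.mono Set.inter_subset_left) ⟨haP, le_refl _, hax.le⟩⟩,
      hc.inter_right isClosed_Icc, ?_, ?_⟩
    · -- perfect
      have heq : Set.Iio x ∩ P = P ∩ Set.Icc a u := by
        ext p
        constructor
        · rintro ⟨hpx, hpP⟩
          exact ⟨hpP, csInf_le hc.bddBelow hpP,
            le_csSup (hc.bddAbove.mono Set.inter_subset_left) ⟨hpP, csInf_le hc.bddBelow hpP, le_of_lt hpx⟩⟩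
        · rintro ⟨hpP, -, hpu⟩
          exact ⟨lt_of_le_of_lt hpu hux, hpP⟩
      have := (hp.closure_nhds_inter a haP (show a ∈ Set.Iio x from hax) isOpen_Iio).1
      rwa [heq, IsClosed.closure_eq (hc.inter_right isClosed_Icc).isClosed] at this
    · exact Set.eq_empty_of_subset_empty (hi ▸ interior_mono Set.inter_subset_left)
  · -- GoodSet right
    refine ⟨⟨b, hbP, csInf_le (hc.bddBelow.mono Set.inter_subset_left) ⟨hbP, hxb.le, le_refl _⟩, le_refl _⟩,
      hc.inter_right isClosed_Icc, ?_, ?_⟩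
    · have heq : Set.Ioi x ∩ P = P ∩ Set.Icc v b := by
        ext p
        constructor
        · rintro ⟨hpx, hpP⟩
          exact ⟨hpP, csInf_le (hc.bddBelow.mono Set.inter_subset_left) ⟨hpP, le_of_lt hpx, le_csSup hc.bddAbove hpP⟩,
            le_csSup hc.bddAbove hpP⟩
        · rintro ⟨hpP, hvp, -⟩
          exact ⟨lt_of_lt_of_le hxv hvp, hpP⟩
      have := (hp.closure_nhds_inter b hbP (show b ∈ Set.Ioi x from hxb) isOpen_Ioi).1
      rwa [heq, IsClosed.closure_eq (hc.inter_right isClosed_Icc).isClosed] at this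
    · exact Set.eq_empty_of_subset_empty (hi ▸ interior_mono Set.inter_subset_left)
  · -- diam left
    have h1 : Metric.diam (P ∩ Set.Icc a u) ≤ Metric.diam (Set.Icc a u) :=
      Metric.diam_mono (Set.inter_subset_right) (Metric.isBounded_Icc _ _)
    have h2 : Metric.diam (Set.Icc a u) = u - a := Real.diam_Icc huMem.2.1
    have h3 : d ≤ Metric.diam P := by
      have := Metric.dist_le_diam_of_mem hc.isBounded haP hbP
      rw [Real.dist_eq, abs_sub_comm, abs_of_nonneg (by linarith : (0:ℝ) ≤ b - a)] at this
      simpa [hd] using this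
    calc Metric.diam (P ∩ Set.Icc a u) ≤ u - a := by rw [← h2]; exact h1
      _ ≤ 2/3 * d := by nlinarith [huMem.2.2, hx2]
      _ ≤ 2/3 * Metric.diam P := by linarith
  · have h1 : Metric.diam (P ∩ Set.Icc v b) ≤ Metric.diam (Set.Icc v b) :=
      Metric.diam_mono (Set.inter_subset_right) (Metric.isBounded_Icc _ _)
    have h2 : Metric.diam (Set.Icc v b) = b - v := Real.diam_Icc hvMem.2.2
    have h3 : d ≤ Metric.diam P := by
      have := Metric.dist_le_diam_of_mem hc.isBounded haP hbP
      rw [Real.dist_eq, abs_sub_comm, abs_of_nonneg (by linarith : (0:ℝ) ≤ b - a)] at this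
      simpa [hd] using this
    calc Metric.diam (P ∩ Set.Icc v b) ≤ b - v := by rw [← h2]; exact h1
      _ ≤ 2/3 * d := by nlinarith [hvMem.2.1, hx1]
      _ ≤ 2/3 * Metric.diam P := by linarith
open scoped Classical in
noncomputable def splitPair (P : Set ℝ) : Set ℝ × Set ℝ :=
  if h : GoodSet P then (goodSet_split h).choose else (∅, ∅)

open scoped Classical in
lemma splitPair_spec {P : Set ℝ} (h : GoodSet P) :
    (splitPair P).1 ∪ (splitPair P).2 = P ∧ Disjoint (splitPair P).1 (splitPair P).2 ∧
      GoodSet (splitPair P).1 ∧ GoodSet (splitPair P).2 ∧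
      Metric.diam (splitPair P).1 ≤ 2/3 * Metric.diam P ∧
      Metric.diam (splitPair P).2 ≤ 2/3 * Metric.diam P := by
  simp only [splitPair, dif_pos h]
  exact (goodSet_split h).choose_spec

/-- The binary scheme of pieces. -/
noncomputable def nodeSet (K : Set ℝ) : ℕ → (ℕ → Bool) → Set ℝ
  | 0, _ => K
  | (n+1), c => if c n then (splitPair (nodeSet K n c)).2 else (splitPair (nodeSet K n c)).1

lemma nodeSet_good {K : Set ℝ} (hK : GoodSet K) (n : ℕ) (c : ℕ → Bool) :
    GoodSet (nodeSet K n c) := by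
  induction n with
  | zero => exact hK
  | succ n ih =>
    have hs := splitPair_spec ih
    by_cases h : c n <;> simp [nodeSet, h, hs.2.2.1, hs.2.2.2.1]

lemma nodeSet_succ_subset {K : Set ℝ} (hK : GoodSet K) (n : ℕ) (c : ℕ → Bool) :
    nodeSet K (n+1) c ⊆ nodeSet K n c := by
  have hs := splitPair_spec (nodeSet_good hK n c)
  have hn1 : nodeSet K (n+1) c
      = if c n then (splitPair (nodeSet K n c)).2 else (splitPair (nodeSet K n c)).1 := rfl
  rw [hn1]
  by_cases h : c n
  · rw [if_pos h]; exact Set.subset_union_right.trans hs.1.subset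
  · rw [if_neg h]; exact Set.subset_union_left.trans hs.1.subset

lemma nodeSet_prefix {K : Set ℝ} (n : ℕ) {c c' : ℕ → Bool} (h : ∀ i < n, c i = c' i) :
    nodeSet K n c = nodeSet K n c' := by
  induction n with
  | zero => rfl
  | succ n ih =>
    have h1 : nodeSet K n c = nodeSet K n c' := ih (fun i hi => h i (Nat.lt_succ_of_lt hi))
    simp only [nodeSet, h1, h n (Nat.lt_succ_self n)]

lemma nodeSet_diam {K : Set ℝ} (hK : GoodSet K) (n : ℕ) (c : ℕ → Bool) :
    Metric.diam (nodeSet K n c) ≤ (2/3)^n * Metric.diam K := by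
  induction n with
  | zero => simp [nodeSet]
  | succ n ih =>
    have hs := splitPair_spec (nodeSet_good hK n c)
    have hb : Metric.diam (nodeSet K (n+1) c) ≤ 2/3 * Metric.diam (nodeSet K n c) := by
      by_cases h : c n <;> simp only [nodeSet, h, if_true, if_false] <;>
        [exact hs.2.2.2.2.2; exact hs.2.2.2.2.1]
    calc Metric.diam (nodeSet K (n+1) c) ≤ 2/3 * Metric.diam (nodeSet K n c) := hb
      _ ≤ 2/3 * ((2/3)^n * Metric.diam K) := by linarith
      _ = (2/3)^(n+1) * Metric.diam K := by ring

/-- Any `GoodSet` is homeomorphic to the Cantor space `ℕ → Bool`. -/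
lemma goodSet_homeo {K : Set ℝ} (hK : GoodSet K) : Nonempty ((ℕ → Bool) ≃ₜ K) := by
  classical
  -- the point picked by each branch
  have hpt : ∀ c : ℕ → Bool, ∃ x : ℝ, ∀ n, x ∈ nodeSet K n c := by
    intro c
    have := IsCompact.nonempty_iInter_of_sequence_nonempty_isCompact_isClosed
      (fun n => nodeSet K n c) (fun n => nodeSet_succ_subset hK n c)
      (fun n => (nodeSet_good hK n c).1) (nodeSet_good hK 0 c).2.1
      (fun n => (nodeSet_good hK n c).2.2.1.1)
    obtain ⟨x, hx⟩ := this
    exact ⟨x, Set.mem_iInter.1 hx⟩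
  choose f hf using hpt
  -- uniqueness of the branch point
  have huniq : ∀ (c : ℕ → Bool) (x y : ℝ), (∀ n, x ∈ nodeSet K n c) → (∀ n, y ∈ nodeSet K n c) →
      x = y := by
    intro c x y hx hy
    have hdist : ∀ n : ℕ, dist x y ≤ (2/3)^n * Metric.diam K := fun n =>
      le_trans (Metric.dist_le_diam_of_mem (nodeSet_good hK n c).2.1.isBounded (hx n) (hy n))
        (nodeSet_diam hK n c)
    have hlim : Filter.Tendsto (fun n : ℕ => (2/3:ℝ)^n * Metric.diam K) Filter.atTop (nhds 0) := by
      have := tendsto_pow_atTop_nhds_zero_of_lt_one (by norm_num : (0:ℝ) ≤ 2/3) (by norm_num)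
      simpa using this.mul_const (Metric.diam K)
    have h0 : dist x y ≤ 0 := le_of_tendsto_of_tendsto' tendsto_const_nhds hlim hdist
    exact dist_le_zero.1 h0
  have hrange : Set.range f = K := by
    apply Set.Subset.antisymm
    · rintro - ⟨c, rfl⟩
      exact hf c 0
    · intro y hy
      -- build the branch containing y
      set S : ℕ → Set ℝ := fun n => Nat.rec K
        (fun _ Sn => if y ∈ (splitPair Sn).1 then (splitPair Sn).1 else (splitPair Sn).2) n with hS
      set c : ℕ → Bool := fun n => if y ∈ (splitPair (S n)).1 then false else true with hcdef
      have hSgood : ∀ n, GoodSet (S n) := by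
        intro n
        induction n with
        | zero => exact hK
        | succ n ih =>
          have hs := splitPair_spec ih
          have hSn1 : S (n+1)
              = if y ∈ (splitPair (S n)).1 then (splitPair (S n)).1 else (splitPair (S n)).2 := rfl
          rw [hSn1]
          by_cases h : y ∈ (splitPair (S n)).1
          · rw [if_pos h]; exact hs.2.2.1
          · rw [if_neg h]; exact hs.2.2.2.1
      have hnode : ∀ n, nodeSet K n c = S n := by
        intro n
        induction n with
        | zero => rfl
        | succ n ih =>
          have hSn1 : S (n+1)
              = if y ∈ (splitPair (S n)).1 then (splitPair (S n)).1 else (splitPair (S n)).2 := rfl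
          have hcn : c n = if y ∈ (splitPair (S n)).1 then false else true := rfl
          have hn1 : nodeSet K (n+1) c
              = if c n then (splitPair (nodeSet K n c)).2 else (splitPair (nodeSet K n c)).1 := rfl
          rw [hn1, ih, hSn1]
          by_cases h : y ∈ (splitPair (S n)).1
          · rw [if_pos h]
            have : c n = false := by rw [hcn, if_pos h]
            rw [this]
            simp
          · rw [if_neg h]
            have : c n = true := by rw [hcn, if_neg h]
            rw [this]
            simp
      have hyS : ∀ n, y ∈ S n := by
        intro n
        induction n with
        | zero => exact hy
        | succ n ih =>
          have hs := splitPair_spec (hSgood n)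
          have hSn1 : S (n+1)
              = if y ∈ (splitPair (S n)).1 then (splitPair (S n)).1 else (splitPair (S n)).2 := rfl
          rw [hSn1]
          by_cases h : y ∈ (splitPair (S n)).1
          · rw [if_pos h]; exact h
          · rw [if_neg h]
            have h2 : y ∈ (splitPair (S n)).1 ∪ (splitPair (S n)).2 := by rw [hs.1]; exact ih
            exact h2.resolve_left h
      exact ⟨c, huniq c (f c) y (hf c) (fun n => (hnode n) ▸ hyS n)⟩
  have hinj : Function.Injective f := by
    intro c c' hcc
    by_contra hne
    have hex : ∃ n, c n ≠ c' n := by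
      by_contra hcon
      push_neg at hcon
      exact hne (funext hcon)
    set n := Nat.find hex with hn
    have hdiff : c n ≠ c' n := Nat.find_spec hex
    have hpre : ∀ i < n, c i = c' i := fun i hi => not_not.1 (Nat.find_min hex hi)
    have hsame : nodeSet K n c = nodeSet K n c' := nodeSet_prefix n hpre
    have hs := splitPair_spec (nodeSet_good hK n c)
    have hmem1 : f c ∈ nodeSet K (n+1) c := hf c (n+1)
    have hmem2 : f c' ∈ nodeSet K (n+1) c' := hf c' (n+1)
    rw [hcc] at hmem1
    cases hb : c n with
    | false =>
      have hb' : c' n = true := by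
        cases hb2 : c' n
        · exact absurd (hb.trans hb2.symm) hdiff
        · rfl
      simp only [nodeSet, hb, if_false] at hmem1
      simp only [nodeSet, hb', if_true, ← hsame] at hmem2
      exact Set.disjoint_left.1 hs.2.1 hmem1 hmem2
    | true =>
      have hb' : c' n = false := by
        cases hb2 : c' n
        · rfl
        · exact absurd (hb.trans hb2.symm) hdiff
      simp only [nodeSet, hb, if_true] at hmem1
      simp only [nodeSet, hb', if_false, ← hsame] at hmem2
      exact Set.disjoint_left.1 hs.2.1 hmem2 hmem1
  have hcont : Continuous f := by
    rw [continuous_iff_continuousAt]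
    intro c
    rw [ContinuousAt, Metric.tendsto_nhds]
    intro ε hε
    obtain ⟨n, hn⟩ : ∃ n : ℕ, (2/3:ℝ)^n * Metric.diam K < ε := by
      have hlim : Filter.Tendsto (fun n : ℕ => (2/3:ℝ)^n * Metric.diam K) Filter.atTop (nhds 0) := by
        have := tendsto_pow_atTop_nhds_zero_of_lt_one (by norm_num : (0:ℝ) ≤ 2/3) (by norm_num)
        simpa using this.mul_const (Metric.diam K)
      have := (hlim.eventually (eventually_lt_nhds hε)).exists
      simpa using this
    have hU : {c' : ℕ → Bool | ∀ i < n, c' i = c i} ∈ nhds c := by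
      have : {c' : ℕ → Bool | ∀ i < n, c' i = c i} = ⋂ i ∈ Finset.range n, {c' : ℕ → Bool | c' i = c i} := by
        ext c'; simp [Finset.mem_range]
      rw [this]
      apply (Filter.biInter_finset_mem _).2
      intro i _
      have : IsOpen {c' : ℕ → Bool | c' i = c i} := by
        have : {c' : ℕ → Bool | c' i = c i} = (fun g : ℕ → Bool => g i) ⁻¹' {c i} := rfl
        rw [this]
        exact (continuous_apply i).isOpen_preimage _ (isOpen_discrete _)
      exact this.mem_nhds (by simp)
    filter_upwards [hU] with c' hc'
    have hsame : nodeSet K n c' = nodeSet K n c := nodeSet_prefix n hc'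
    have h1 : f c' ∈ nodeSet K n c := hsame ▸ hf c' n
    have h2 : f c ∈ nodeSet K n c := hf c n
    calc dist (f c') (f c) ≤ Metric.diam (nodeSet K n c) :=
          Metric.dist_le_diam_of_mem (nodeSet_good hK n c).2.1.isBounded h1 h2
      _ ≤ (2/3)^n * Metric.diam K := nodeSet_diam hK n c
      _ < ε := hn
  -- assemble the homeomorphism
  have hmem : ∀ c, f c ∈ K := fun c => hf c 0
  let e : (ℕ → Bool) ≃ K := Equiv.ofBijective (fun c => ⟨f c, hmem c⟩)
    ⟨fun c c' h => hinj (Subtype.mk_eq_mk.1 h),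
     fun ⟨y, hy⟩ => by
        obtain ⟨c, hc⟩ : y ∈ Set.range f := hrange ▸ hy
        exact ⟨c, Subtype.ext hc⟩⟩
  have hcont' : Continuous (fun c => (⟨f c, hmem c⟩ : K)) := hcont.subtype_mk hmem
  exact ⟨Continuous.homeoOfEquivCompactToT2 (f := e) hcont'⟩
lemma one_mem_cantorSet : (1:ℝ) ∈ cantorSet := by
  apply Set.mem_iInter.2
  intro n
  induction n with
  | zero => exact ⟨zero_le_one, le_refl _⟩
  | succ n ih => exact Or.inr ⟨1, ih, by norm_num⟩

lemma preCantorSet_antitone' : ∀ n, preCantorSet (n+1) ⊆ preCantorSet n := by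
  intro n
  induction n with
  | zero =>
    rintro x (⟨y, hy, rfl⟩ | ⟨y, hy, rfl⟩)
    · exact ⟨by linarith [hy.1], by linarith [hy.2]⟩
    · exact ⟨by linarith [hy.1], by linarith [hy.2]⟩
  | succ n ih =>
    rintro x (⟨y, hy, rfl⟩ | ⟨y, hy, rfl⟩)
    · exact Or.inl ⟨y, ih hy, rfl⟩
    · exact Or.inr ⟨y, ih hy, rfl⟩

lemma preCantorSet_subset_unit (n : ℕ) : preCantorSet n ⊆ Set.Icc 0 1 := by
  induction n with
  | zero => exact le_refl _
  | succ n ih =>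
    rintro x (⟨y, hy, rfl⟩ | ⟨y, hy, rfl⟩)
    · have := ih hy; exact ⟨by linarith [this.1], by linarith [this.2]⟩
    · have := ih hy; exact ⟨by linarith [this.1], by linarith [this.2]⟩

lemma cantorSet_self_similar :
    cantorSet = (· / 3) '' cantorSet ∪ (fun x => (2 + x) / 3) '' cantorSet := by
  apply Set.Subset.antisymm
  · intro x hx
    have hxall : ∀ n, x ∈ preCantorSet (n+1) := fun n => Set.mem_iInter.1 hx (n+1)
    rcases lt_or_ge x (2/3 : ℝ) with hlt | hge
    · left
      refine ⟨3 * x, Set.mem_iInter.2 fun n => ?_, by ring⟩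
      rcases hxall n with ⟨y, hy, hyx⟩ | ⟨y, hy, hyx⟩
      · have : (3:ℝ) * x = y := by rw [← hyx]; ring
        exact this ▸ hy
      · exfalso
        have := (preCantorSet_subset_unit n hy).1
        rw [← hyx] at hlt
        linarith
    · right
      refine ⟨3 * x - 2, Set.mem_iInter.2 fun n => ?_, by ring⟩
      rcases hxall n with ⟨y, hy, hyx⟩ | ⟨y, hy, hyx⟩
      · exfalso
        have := (preCantorSet_subset_unit n hy).2
        rw [← hyx] at hge
        linarith
      · have : (3:ℝ) * x - 2 = y := by rw [← hyx]; ring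
        exact this ▸ hy
  · rintro x (⟨y, hy, rfl⟩ | ⟨y, hy, rfl⟩) <;>
    · apply Set.mem_iInter.2
      intro n
      cases n with
      | zero => first
        | exact preCantorSet_antitone' 0 (Or.inl ⟨y, Set.mem_iInter.1 hy 0, rfl⟩)
        | exact preCantorSet_antitone' 0 (Or.inr ⟨y, Set.mem_iInter.1 hy 0, rfl⟩)
      | succ n => first
        | exact Or.inl ⟨y, Set.mem_iInter.1 hy n, rfl⟩
        | exact Or.inr ⟨y, Set.mem_iInter.1 hy n, rfl⟩

lemma cantorSet_approx (n : ℕ) : ∀ x ∈ cantorSet,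
    ∃ y ∈ cantorSet, y ≠ x ∧ |y - x| ≤ (1/3)^n := by
  induction n with
  | zero =>
    intro x hx
    rcases eq_or_ne x 0 with rfl | hne
    · exact ⟨1, one_mem_cantorSet, one_ne_zero, by norm_num⟩
    · refine ⟨0, zero_mem_cantorSet, fun h => hne h.symm, ?_⟩
      have h01 := cantorSet_subset_unitInterval hx
      rw [abs_of_nonpos (by linarith [h01.1])]
      simpa using h01.2
  | succ n ih =>
    intro x hx
    rw [cantorSet_self_similar] at hx
    rcases hx with ⟨y, hy, rfl⟩ | ⟨y, hy, rfl⟩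
    · obtain ⟨y', hy', hne, hd⟩ := ih y hy
      refine ⟨y' / 3, by rw [cantorSet_self_similar]; exact Or.inl ⟨y', hy', rfl⟩,
        fun h => hne (by field_simp at h; linarith), ?_⟩
      have : |y' / 3 - y / 3| = |y' - y| / 3 := by
        have h2 : y' / 3 - y / 3 = (y' - y) * (1/3) := by ring
        rw [h2, abs_mul, abs_of_nonneg (by norm_num : (0:ℝ) ≤ 1/3)]
        ring
      rw [this, pow_succ]
      calc |y' - y| / 3 ≤ (1/3)^n / 3 := by linarith
        _ = (1/3)^n * (1/3) := by ring
    · obtain ⟨y', hy', hne, hd⟩ := ih y hy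
      refine ⟨(2 + y') / 3, by rw [cantorSet_self_similar]; exact Or.inr ⟨y', hy', rfl⟩,
        fun h => hne (by field_simp at h; linarith), ?_⟩
      have : |(2 + y') / 3 - (2 + y) / 3| = |y' - y| / 3 := by
        have h2 : (2 + y') / 3 - (2 + y) / 3 = (y' - y) * (1/3) := by ring
        rw [h2, abs_mul, abs_of_nonneg (by norm_num : (0:ℝ) ≤ 1/3)]
        ring
      rw [this, pow_succ]
      calc |y' - y| / 3 ≤ (1/3)^n / 3 := by linarith
        _ = (1/3)^n * (1/3) := by ring

lemma cantorSet_no_interval (n : ℕ) : ∀ a b : ℝ, Set.Ioo a b ⊆ cantorSet → b - a ≤ 2 * (1/3)^n := by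
  induction n with
  | zero =>
    intro a b hab
    rcases le_or_gt b a with h | h
    · simp only [pow_zero]; linarith
    · have h1 : ∀ x ∈ Set.Ioo a b, x ∈ Set.Icc (0:ℝ) 1 :=
        fun x hx => cantorSet_subset_unitInterval (hab hx)
      have hmean : a + (b-a)/4 ∈ Set.Ioo a b := by constructor <;> nlinarith
      have hmean2 : b - (b-a)/4 ∈ Set.Ioo a b := by constructor <;> nlinarith
      have e1 := (h1 _ hmean).1
      have e2 := (h1 _ hmean2).2
      simp only [pow_zero]
      linarith
  | succ n ih =>
    intro a b hab
    rcases le_or_gt b a with h | h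
    · calc b - a ≤ 0 := by linarith
        _ ≤ 2 * (1/3)^(n+1) := by positivity
    -- the open interval avoids the middle gap (1/3, 2/3)
    have hsub : ∀ x ∈ Set.Ioo a b, x ≤ 1/3 ∨ 2/3 ≤ x := by
      intro x hx
      have hx' := hab hx
      rw [cantorSet_self_similar] at hx'
      rcases hx' with ⟨y, hy, rfl⟩ | ⟨y, hy, rfl⟩
      · left; have := (cantorSet_subset_unitInterval hy).2; linarith
      · right; have := (cantorSet_subset_unitInterval hy).1; linarith
    have hcase : b ≤ 1/3 + (b-a)/2 ∨ 2/3 ≤ a + (b-a)/2 := by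
      rcases hsub ((a+b)/2) ⟨by linarith, by linarith⟩ with h' | h'
      · left; linarith
      · right; linarith
    -- in fact the whole interval is on one side
    have hside : b ≤ 1/3 ∨ 2/3 ≤ a := by
      by_contra hcon
      push_neg at hcon
      obtain ⟨h1, h2⟩ := hcon
      -- interval meets (1/3, 2/3)
      set t := max a (1/3) with ht
      set s := min b (2/3) with hs
      have hts : t < s := by
        rcases hsub ((a+b)/2) ⟨by linarith, by linarith⟩ with h' | h' <;>
          simp only [ht, hs, lt_min_iff, max_lt_iff] <;>
          constructor <;> constructor <;> linarith
      have hmid : (t+s)/2 ∈ Set.Ioo a b :=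
        ⟨by have := le_max_left a (1/3:ℝ); have := min_le_left b (2/3:ℝ); linarith,
         by have := le_max_left a (1/3:ℝ); have := min_le_left b (2/3:ℝ); linarith⟩
      have h3 : (1:ℝ)/3 < (t+s)/2 := by
        have := le_max_right a (1/3:ℝ); linarith
      have h4 : (t+s)/2 < 2/3 := by
        have := min_le_right b (2/3:ℝ); linarith
      rcases hsub _ hmid with h' | h' <;> linarith
    rcases hside with hside | hside
    · -- left part: 3x ∈ cantorSet for x in interval
      have h3 : Set.Ioo (3*a) (3*b) ⊆ cantorSet := by
        intro w hw
        have hw3 : w/3 ∈ Set.Ioo a b := ⟨by linarith [hw.1], by linarith [hw.2]⟩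
        have := hab hw3
        rw [cantorSet_self_similar] at this
        rcases this with ⟨y, hy, hyx⟩ | ⟨y, hy, hyx⟩
        · have : y = w := by field_simp at hyx; linarith
          exact this ▸ hy
        · exfalso
          have := (cantorSet_subset_unitInterval hy).1
          have hwb : w/3 < b := hw3.2
          have : (2:ℝ)/3 ≤ w/3 := by rw [← hyx]; linarith
          linarith
      have := ih (3*a) (3*b) h3
      rw [pow_succ]
      nlinarith [pow_nonneg (by norm_num : (0:ℝ) ≤ 1/3) n]
    · have h3 : Set.Ioo (3*a - 2) (3*b - 2) ⊆ cantorSet := by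
        intro w hw
        have hw3 : (2+w)/3 ∈ Set.Ioo a b := ⟨by linarith [hw.1], by linarith [hw.2]⟩
        have := hab hw3
        rw [cantorSet_self_similar] at this
        rcases this with ⟨y, hy, hyx⟩ | ⟨y, hy, hyx⟩
        · exfalso
          have := (cantorSet_subset_unitInterval hy).2
          have : (2+w)/3 ≤ 1/3 := by rw [← hyx]; linarith
          linarith [hw3.1]
        · have : y = w := by field_simp at hyx; linarith
          exact this ▸ hy
      have := ih (3*a - 2) (3*b - 2) h3
      rw [pow_succ]
      nlinarith [pow_nonneg (by norm_num : (0:ℝ) ≤ 1/3) n]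

lemma goodSet_cantorSet : GoodSet cantorSet := by
  refine ⟨⟨0, zero_mem_cantorSet⟩, isCompact_cantorSet, ⟨isClosed_cantorSet, ?_⟩, ?_⟩
  · intro x hx
    rw [accPt_iff_nhds]
    intro U hU
    obtain ⟨ε, hε, hball⟩ := Metric.mem_nhds_iff.1 hU
    obtain ⟨n, hn⟩ : ∃ n : ℕ, ((1:ℝ)/3)^n < ε := by
      obtain ⟨n, hn⟩ := exists_pow_lt_of_lt_one hε (by norm_num : (1:ℝ)/3 < 1)
      exact ⟨n, hn⟩
    obtain ⟨y, hy, hyne, hyd⟩ := cantorSet_approx n x hx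
    exact ⟨y, ⟨hball (by rw [Metric.mem_ball, Real.dist_eq]; linarith [hyd]), hy⟩, hyne⟩
  · by_contra hcon
    obtain ⟨x, hx⟩ := Set.nonempty_iff_ne_empty.2 hcon
    obtain ⟨ε, hε, hball⟩ := Metric.mem_nhds_iff.1 (mem_interior_iff_mem_nhds.1 hx)
    have hsub : Set.Ioo (x - ε/2) (x + ε/2) ⊆ cantorSet := by
      intro w hw
      exact hball (by rw [Metric.mem_ball, Real.dist_eq]; rw [Set.mem_Ioo] at hw; rw [abs_lt]; constructor <;> linarith [hw.1, hw.2])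
    obtain ⟨n, hn⟩ : ∃ n : ℕ, ((1:ℝ)/3)^n < ε/4 := by
      obtain ⟨n, hn⟩ := exists_pow_lt_of_lt_one (by linarith : (0:ℝ) < ε/4) (by norm_num : (1:ℝ)/3 < 1)
      exact ⟨n, hn⟩
    have := cantorSet_no_interval n (x - ε/2) (x + ε/2) hsub
    linarith
noncomputable def bsum (u : ℕ → ℝ) (c : ℕ → Bool) : ℝ := ∑' n, if c n then u n else 0

noncomputable def rtail (u : ℕ → ℝ) (n : ℕ) : ℝ := ∑' k, u (k + n)

section series

variable {u : ℕ → ℝ}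

lemma bite_le (hu : ∀ k, 0 ≤ u k) {c : ℕ → Bool} (k : ℕ) : (if c k then u k else 0) ≤ u k := by
  by_cases h : c k <;> simp [h, hu k]

lemma bite_nonneg (hu : ∀ k, 0 ≤ u k) {c : ℕ → Bool} (k : ℕ) : 0 ≤ (if c k then u k else 0) := by
  by_cases h : c k <;> simp [h, hu k]

lemma bsum_summable (hu : ∀ k, 0 ≤ u k) (hsu : Summable u) (c : ℕ → Bool) : Summable (fun n => if c n then u n else 0) :=
  Summable.of_nonneg_of_le (bite_nonneg hu) (bite_le hu) hsu

lemma summable_shift (hsu : Summable u) (n : ℕ) : Summable (fun k => u (k + n)) :=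
  (summable_nat_add_iff n).2 hsu

lemma rtail_nonneg (hu : ∀ k, 0 ≤ u k) (n : ℕ) : 0 ≤ rtail u n :=
  tsum_nonneg (fun k => hu _)

lemma rtail_succ (hsu : Summable u) (n : ℕ) : rtail u n = u n + rtail u (n+1) := by
  have h1 : rtail u n = u (0 + n) + ∑' k, u ((k + 1) + n) :=
    Summable.tsum_eq_zero_add (summable_shift hsu n)
  rw [h1, zero_add]
  congr 1
  apply tsum_congr
  intro k
  congr 1
  omega

lemma rtail_tendsto (hsu : Summable u) : Filter.Tendsto (rtail u) Filter.atTop (nhds 0) :=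
  tendsto_sum_nat_add u

lemma rtail_sub (hsu : Summable u) {m n : ℕ} (hmn : m ≤ n) :
    rtail u m = (∑ i ∈ Finset.range (n - m), u (i + m)) + rtail u n := by
  have h1 := (Summable.sum_add_tsum_nat_add (f := fun k => u (k + m)) (n - m)
    (summable_shift hsu m)).symm
  rw [rtail, h1]
  congr 1
  apply tsum_congr
  intro k
  congr 1
  omega

lemma bsum_split (hu : ∀ k, 0 ≤ u k) (hsu : Summable u) (c : ℕ → Bool) (n : ℕ) :
    bsum u c = (∑ k ∈ Finset.range n, if c k then u k else 0)
      + ∑' k, if c (k + n) then u (k + n) else 0 :=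
  (Summable.sum_add_tsum_nat_add n (bsum_summable hu hsu c)).symm

lemma bsum_tail_le (hu : ∀ k, 0 ≤ u k) (hsu : Summable u) (c : ℕ → Bool) (n : ℕ) :
    (∑' k, if c (k + n) then u (k + n) else 0) ≤ rtail u n := by
  apply Summable.tsum_le_tsum (fun k => bite_le hu _)
  · exact Summable.of_nonneg_of_le (fun k => bite_nonneg hu _) (fun k => bite_le hu _)
      (summable_shift hsu n)
  · exact summable_shift hsu n

lemma bsum_tail_nonneg (hu : ∀ k, 0 ≤ u k) (c : ℕ → Bool) (n : ℕ) :
    0 ≤ ∑' k, if c (k + n) then u (k + n) else 0 :=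
  tsum_nonneg (fun k => bite_nonneg hu _)

lemma bsum_continuous (hu : ∀ k, 0 ≤ u k) (hsu : Summable u) : Continuous (bsum u) := by
  rw [continuous_iff_continuousAt]
  intro c
  rw [ContinuousAt, Metric.tendsto_nhds]
  intro ε hε
  obtain ⟨n, hn⟩ : ∃ n : ℕ, rtail u n < ε/2 := by
    have := ((rtail_tendsto hsu).eventually (eventually_lt_nhds (by linarith : (0:ℝ) < ε/2))).exists
    simpa using this
  have hU : {c' : ℕ → Bool | ∀ i < n, c' i = c i} ∈ nhds c := by
    have : {c' : ℕ → Bool | ∀ i < n, c' i = c i}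
        = ⋂ i ∈ Finset.range n, {c' : ℕ → Bool | c' i = c i} := by
      ext c'; simp [Finset.mem_range]
    rw [this]
    apply (Filter.biInter_finset_mem _).2
    intro i _
    have : IsOpen {c' : ℕ → Bool | c' i = c i} := by
      have : {c' : ℕ → Bool | c' i = c i} = (fun g : ℕ → Bool => g i) ⁻¹' {c i} := rfl
      rw [this]
      exact (continuous_apply i).isOpen_preimage _ (isOpen_discrete _)
    exact this.mem_nhds (by simp)
  filter_upwards [hU] with c' hc'
  have hhead : (∑ k ∈ Finset.range n, if c' k then u k else 0)
      = ∑ k ∈ Finset.range n, if c k then u k else 0 :=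
    Finset.sum_congr rfl (fun k hk => by rw [hc' k (Finset.mem_range.1 hk)])
  rw [Real.dist_eq, bsum_split hu hsu c' n, bsum_split hu hsu c n, hhead]
  have h1 := bsum_tail_le hu hsu c' n
  have h2 := bsum_tail_le hu hsu c n
  have h3 := bsum_tail_nonneg hu c' n
  have h4 := bsum_tail_nonneg hu c n
  rw [abs_lt]
  constructor <;> [linarith; linarith]

end series

section kakeya

variable {u : ℕ → ℝ}

/-- Separation of distinct partial subset sums under the Kakeya condition. -/
lemma kakeya_sep (hu : ∀ k, 0 < u k) (hsu : Summable u)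
    (hk : ∀ k, rtail u (k+1) < u k) (c c' : ℕ → Bool) (n : ℕ)
    (hne : (∑ k ∈ Finset.range n, if c k then u k else 0)
      ≠ ∑ k ∈ Finset.range n, if c' k then u k else 0) :
    rtail u n < |(∑ k ∈ Finset.range n, if c k then u k else 0)
      - ∑ k ∈ Finset.range n, if c' k then u k else 0| := by
  have hu' : ∀ k, 0 ≤ u k := fun k => (hu k).le
  have hex : ∃ m, m < n ∧ c m ≠ c' m := by
    by_contra hcon
    push_neg at hcon
    exact hne (Finset.sum_congr rfl (fun k hk' => by
      rw [hcon k (Finset.mem_range.1 hk')]))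
  classical
  set m := Nat.find hex with hm
  obtain ⟨hmn, hmne⟩ := Nat.find_spec hex
  have hpre : ∀ i < m, c i = c' i := by
    intro i hi
    have := Nat.find_min hex hi
    push_neg at this
    exact this (lt_trans hi hmn)
  set D := (∑ k ∈ Finset.range n, if c k then u k else 0)
    - ∑ k ∈ Finset.range n, if c' k then u k else 0 with hD
  have hDsum : D = ∑ k ∈ Finset.range n, ((if c k then u k else 0) - (if c' k then u k else 0)) := by
    rw [hD, Finset.sum_sub_distrib]
  set g : ℕ → ℝ := fun k => (if c k then u k else 0) - (if c' k then u k else 0) with hg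
  have hsplit : D = g m + ∑ k ∈ Finset.Ico (m+1) n, g k := by
    rw [hDsum, Finset.range_eq_Ico, ← Finset.sum_Ico_consecutive _ (Nat.zero_le m) hmn.le]
    have hzero : ∑ k ∈ Finset.Ico 0 m, g k = 0 :=
      Finset.sum_eq_zero (fun k hk' => by
        have : c k = c' k := hpre k (Finset.mem_Ico.1 hk').2
        simp [hg, this])
    rw [hzero, zero_add, Finset.sum_eq_sum_Ico_succ_bot hmn]
  set R := ∑ k ∈ Finset.Ico (m+1) n, g k with hR
  have hRbound : |R| ≤ rtail u (m+1) - rtail u n := by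
    have h1 : |R| ≤ ∑ k ∈ Finset.Ico (m+1) n, |g k| := Finset.abs_sum_le_sum_abs _ _
    have h2 : ∀ k, |g k| ≤ u k := by
      intro k
      by_cases hc : c k <;> by_cases hc' : c' k <;>
        simp [hg, hc, hc', abs_of_nonneg (hu' k), abs_of_nonpos, hu' k]
    have h3 : ∑ k ∈ Finset.Ico (m+1) n, |g k| ≤ ∑ k ∈ Finset.Ico (m+1) n, u k :=
      Finset.sum_le_sum (fun k _ => h2 k)
    have h4 : ∑ k ∈ Finset.Ico (m+1) n, u k = rtail u (m+1) - rtail u n := by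
      rw [rtail_sub hsu (show m+1 ≤ n from hmn), Finset.sum_Ico_eq_sum_range]
      have : ∀ i, u (m + 1 + i) = u (i + (m+1)) := fun i => by congr 1; omega
      simp only [this]
      ring
    linarith
  have hum : rtail u (m+1) < u m := hk m
  have habs : ∀ x : ℝ, x ≤ |x| ∧ -x ≤ |x| := fun x => ⟨le_abs_self x, neg_le_abs x⟩
  cases hcb : c m with
  | true =>
    have hcb' : c' m = false := by
      cases h : c' m
      · rfl
      · exact absurd (hcb.trans h.symm) hmne
    have hgm : g m = u m := by simp [hg, hcb, hcb']
    have hDlb : rtail u n < D := by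
      rw [hsplit, hgm]
      have := (habs R).2
      have := abs_le.1 hRbound
      linarith [hRbound, (abs_le.1 hRbound).1]
    exact lt_of_lt_of_le hDlb (le_abs_self D)
  | false =>
    have hcb' : c' m = true := by
      cases h : c' m
      · exact absurd (hcb.trans h.symm) hmne
      · rfl
    have hgm : g m = -u m := by simp [hg, hcb, hcb']
    have hDub : D < -(rtail u n) := by
      rw [hsplit, hgm]
      linarith [(abs_le.1 hRbound).2]
    calc rtail u n < -D := by linarith
      _ ≤ |D| := neg_le_abs D
end kakeya
section gap

variable {u : ℕ → ℝ}

lemma kakeya_gap (hu : ∀ k, 0 < u k) (hsu : Summable u)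
    (hk : ∀ k, rtail u (k+1) < u k) (c : ℕ → Bool) (n : ℕ) :
    ((∑ k ∈ Finset.range n, if c k then u k else 0) + rtail u n / 2)
      ∉ Set.range (bsum u) := by
  have hu' : ∀ k, 0 ≤ u k := fun k => (hu k).le
  rintro ⟨c', hc'⟩
  set s := ∑ k ∈ Finset.range n, if c k then u k else 0 with hs
  set s' := ∑ k ∈ Finset.range n, if c' k then u k else 0 with hs'
  set r' := ∑' k, if c' (k + n) then u (k + n) else 0 with hr'
  have hsplit : s' + r' = s + rtail u n / 2 := by
    rw [hs', hr', ← bsum_split hu' hsu c' n, hc']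
  have hr'0 : 0 ≤ r' := bsum_tail_nonneg hu' c' n
  have hr'le : r' ≤ rtail u n := bsum_tail_le hu' hsu c' n
  have ht0 : 0 ≤ rtail u n := rtail_nonneg hu' n
  have hss : s = s' := by
    by_contra hne
    have := kakeya_sep hu hsu hk c c' n hne
    have habs : |s - s'| ≤ rtail u n := by
      have : s - s' = r' - rtail u n / 2 := by linarith
      rw [this, abs_le]
      constructor <;> linarith
    linarith
  have hreq : r' = rtail u n / 2 := by linarith [hsplit, hss]
  -- split off the first term of the tail
  have hsum' : Summable (fun k => if c' (k + n) then u (k + n) else 0) :=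
    Summable.of_nonneg_of_le (fun k => bite_nonneg hu' _) (fun k => bite_le hu' _)
      (summable_shift hsu n)
  have hsplit2 : r' = (if c' n then u n else 0)
      + ∑' k, if c' (k + (n+1)) then u (k + (n+1)) else 0 := by
    rw [hr', Summable.tsum_eq_zero_add hsum']
    congr 1
    · simp
    · apply tsum_congr
      intro k
      rw [show k + 1 + n = k + (n+1) from by omega]
  set r'' := ∑' k, if c' (k + (n+1)) then u (k + (n+1)) else 0 with hr''
  have hr''0 : 0 ≤ r'' := bsum_tail_nonneg hu' c' (n+1)
  have hr''le : r'' ≤ rtail u (n+1) := bsum_tail_le hu' hsu c' (n+1)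
  have htsucc : rtail u n = u n + rtail u (n+1) := rtail_succ hsu n
  have hlt : rtail u (n+1) < u n := hk n
  by_cases hcn : c' n
  · rw [if_pos hcn] at hsplit2
    linarith
  · rw [if_neg hcn, zero_add] at hsplit2
    linarith

lemma kakeya_interior (hu : ∀ k, 0 < u k) (hsu : Summable u)
    (hk : ∀ k, rtail u (k+1) < u k) :
    interior (Set.range (bsum u)) = ∅ := by
  have hu' : ∀ k, 0 ≤ u k := fun k => (hu k).le
  by_contra hcon
  obtain ⟨x, hx⟩ := Set.nonempty_iff_ne_empty.2 hcon
  obtain ⟨ε, hε, hball⟩ := Metric.mem_nhds_iff.1 (mem_interior_iff_mem_nhds.1 hx)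
  obtain ⟨c, hc⟩ := interior_subset hx
  obtain ⟨n, hn⟩ : ∃ n : ℕ, rtail u n < ε := by
    have := ((rtail_tendsto hsu).eventually (eventually_lt_nhds hε)).exists
    simpa using this
  set p := (∑ k ∈ Finset.range n, if c k then u k else 0) + rtail u n / 2 with hp
  have hxeq : x = (∑ k ∈ Finset.range n, if c k then u k else 0)
      + ∑' k, if c (k + n) then u (k + n) else 0 := by
    rw [← bsum_split hu' hsu c n, hc]
  have h1 := bsum_tail_nonneg hu' c n
  have h2 := bsum_tail_le hu' hsu c n
  have ht0 := rtail_nonneg hu' n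
  have hmem : p ∈ Metric.ball x ε := by
    rw [Metric.mem_ball, Real.dist_eq, hp, hxeq]
    have : (∑ k ∈ Finset.range n, if c k then u k else 0) + rtail u n / 2
        - ((∑ k ∈ Finset.range n, if c k then u k else 0)
          + ∑' k, if c (k + n) then u (k + n) else 0)
        = rtail u n / 2 - ∑' k, if c (k + n) then u (k + n) else 0 := by ring
    rw [this, abs_lt]
    constructor <;> linarith
  exact kakeya_gap hu hsu hk c n (hball hmem)

lemma bsum_flip_abs (hu : ∀ k, 0 ≤ u k) (hsu : Summable u) (c : ℕ → Bool) (n : ℕ) :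
    |bsum u (Function.update c n (!c n)) - bsum u c| = u n := by
  classical
  set c' := Function.update c n (!c n) with hc'
  have htail : (∑' k, if c' (k + (n+1)) then u (k + (n+1)) else 0)
      = ∑' k, if c (k + (n+1)) then u (k + (n+1)) else 0 := by
    apply tsum_congr
    intro k
    have : c' (k + (n+1)) = c (k + (n+1)) := Function.update_of_ne (by omega) _ _
    rw [this]
  have hdiff : bsum u c' - bsum u c
      = (∑ k ∈ Finset.range (n+1), ((if c' k then u k else 0) - (if c k then u k else 0))) := by
    rw [bsum_split hu hsu c' (n+1), bsum_split hu hsu c (n+1), htail, Finset.sum_sub_distrib]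
    ring
  have hsingle : (∑ k ∈ Finset.range (n+1), ((if c' k then u k else 0) - (if c k then u k else 0)))
      = (if c' n then u n else 0) - (if c n then u n else 0) := by
    apply Finset.sum_eq_single_of_mem n (Finset.self_mem_range_succ n)
    intro k _ hkn
    have : c' k = c k := Function.update_of_ne hkn _ _
    rw [this]
    ring
  rw [hdiff, hsingle, hc']
  have hupd : Function.update c n (!c n) n = !c n := Function.update_self _ _ _
  rw [hupd]
  cases hb : c n <;> simp [hb, abs_sub_comm, abs_of_nonneg (hu n)]

lemma range_bsum_perfect (hu : ∀ k, 0 < u k) (hsu : Summable u) :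
    Perfect (Set.range (bsum u)) := by
  have hu' : ∀ k, 0 ≤ u k := fun k => (hu k).le
  have hclosed : IsClosed (Set.range (bsum u)) :=
    (isCompact_range (bsum_continuous hu' hsu)).isClosed
  refine ⟨hclosed, ?_⟩
  rintro x ⟨c, rfl⟩
  rw [accPt_iff_nhds]
  intro U hU
  obtain ⟨ε, hε, hball⟩ := Metric.mem_nhds_iff.1 hU
  obtain ⟨n, hn⟩ : ∃ n : ℕ, u n < ε := by
    have := ((hsu.tendsto_atTop_zero).eventually (eventually_lt_nhds hε)).exists
    simpa using this
  refine ⟨bsum u (Function.update c n (!c n)), ⟨?_, Set.mem_range_self _⟩, ?_⟩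
  · apply hball
    rw [Metric.mem_ball, Real.dist_eq, bsum_flip_abs hu' hsu c n]
    exact hn
  · intro heq
    have := bsum_flip_abs hu' hsu c n
    rw [heq] at this
    simp only [sub_self, abs_zero] at this
    exact absurd this.symm (ne_of_gt (hu n))

end gap

lemma interior_union_empty {A B : Set ℝ} (hA : IsClosed A) (hiA : interior A = ∅)
    (hB : IsClosed B) (hiB : interior B = ∅) : interior (A ∪ B) = ∅ := by
  have h1 : interior (A ∪ B) \ A ⊆ interior B :=
    interior_maximal (fun x hx => (interior_subset hx.1).resolve_left hx.2)
      (isOpen_interior.sdiff hA)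
  rw [hiB, Set.subset_empty_iff, Set.diff_eq_empty] at h1
  have h2 : interior (A ∪ B) ⊆ interior A := interior_maximal h1 isOpen_interior
  rw [hiA, Set.subset_empty_iff] at h2
  exact h2

lemma interior_biUnion_finset_empty (S : Finset ℝ) (f : ℝ → Set ℝ)
    (h : ∀ s ∈ S, IsClosed (f s) ∧ interior (f s) = ∅) :
    interior (⋃ s ∈ S, f s) = ∅ := by
  classical
  induction S using Finset.induction_on with
  | empty => simp
  | @insert a T hna ih =>
    rw [Finset.set_biUnion_insert]
    apply interior_union_empty (h a (Finset.mem_insert_self a T)).1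
      (h a (Finset.mem_insert_self a T)).2
    · exact Set.Finite.isClosed_biUnion T.finite_toSet
        (fun s hs => (h s (Finset.mem_insert_of_mem hs)).1)
    · exact ih (fun s hs => h s (Finset.mem_insert_of_mem hs))

end KakeyaAux

/-- Kakeya–Hornich Cantor criterion: if each term strictly exceeds its tail for all but
finitely many `n`, the achievement set is homeomorphic to the Cantor set. -/
theorem stmt_8 (z : ℕ → ℝ)
    (hpos : ∀ n, 1 ≤ n → 0 < z n)
    (hanti : ∀ n, 1 ≤ n → z (n + 1) ≤ z n)
    (hsum : Summable (fun n : ℕ => z (n + 1)))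
    (hcrit : ∃ N, ∀ n, N ≤ n → (∑' j : ℕ, z (n + 1 + j)) < z n) :
    Nonempty (subsums z ≃ₜ cantorSet) := by
  classical
  obtain ⟨N, hN⟩ := hcrit
  set w : ℕ → ℝ := fun k => z (k + 1) with hw
  have hw0 : ∀ k, 0 < w k := fun k => hpos (k + 1) (by omega)
  have hw0' : ∀ k, 0 ≤ w k := fun k => (hw0 k).le
  have hsw : Summable w := hsum
  -- the subsums set is the range of `bsum w`
  have hEq : subsums z = Set.range (bsum w) := by
    ext y
    constructor
    · rintro ⟨c, hc⟩
      refine ⟨fun n => c (n + 1), ?_⟩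
      exact hc.tsum_eq
    · rintro ⟨d, rfl⟩
      refine ⟨fun n => d (n - 1), ?_⟩
      have hfun : (fun n => if d ((n + 1) - 1) then z (n + 1) else 0)
          = fun n => if d n then w n else 0 := by
        funext n
        simp [hw]
      show HasSum (fun n => if d ((n + 1) - 1) then z (n + 1) else 0) (bsum w d)
      rw [hfun]
      exact (bsum_summable hw0' hsw d).hasSum
  -- the shifted tail series satisfies the Kakeya condition everywhere
  set v : ℕ → ℝ := fun k => w (N + k) with hv
  have hv0 : ∀ k, 0 < v k := fun k => hw0 _
  have hv0' : ∀ k, 0 ≤ v k := fun k => (hv0 k).le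
  have hsv : Summable v := by
    apply (summable_shift hsw N).congr
    intro k
    simp only [hv]
    congr 1
    omega
  have hkv : ∀ k, rtail v (k+1) < v k := by
    intro k
    have h1 : rtail v (k+1) = ∑' j, z ((N + k + 1) + 1 + j) := by
      apply tsum_congr
      intro j
      simp only [hv, hw]
      congr 1
      omega
    have h2 : v k = z (N + k + 1) := rfl
    rw [h1, h2]
    exact hN (N + k + 1) (by omega)
  -- covering of the range by finitely many translates of the tail set
  set T := Set.range (bsum v) with hT
  have hTclosed : IsClosed T := (isCompact_range (bsum_continuous hv0' hsv)).isClosed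
  have hTint : interior T = ∅ := kakeya_interior hv0 hsv hkv
  set Sfin : Finset ℝ := (Finset.range N).powerset.image (fun A => ∑ k ∈ A, w k) with hSfin
  have hcover : Set.range (bsum w) ⊆ ⋃ s ∈ Sfin, (fun x => s + x) '' T := by
    rintro - ⟨c, rfl⟩
    have hsplit := bsum_split hw0' hsw c N
    have htaileq : (∑' k, if c (k + N) then w (k + N) else 0)
        = bsum v (fun k => c (N + k)) := by
      apply tsum_congr
      intro k
      have h1 : c (k + N) = c (N + k) := by rw [Nat.add_comm]
      have h2 : w (k + N) = v k := by simp only [hv]; congr 1; omega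
      rw [h1, h2]
    have hheadmem : (∑ k ∈ Finset.range N, if c k then w k else 0) ∈ Sfin := by
      rw [hSfin]
      apply Finset.mem_image.2
      refine ⟨(Finset.range N).filter (fun k => c k), ?_, ?_⟩
      · exact Finset.mem_powerset.2 (Finset.filter_subset _ _)
      · rw [Finset.sum_filter]
    apply Set.mem_biUnion hheadmem
    exact ⟨bsum v (fun k => c (N + k)), Set.mem_range_self _,
      by rw [hsplit, htaileq]⟩
  have hint : interior (Set.range (bsum w)) = ∅ := by
    have hbig : interior (⋃ s ∈ Sfin, (fun x : ℝ => s + x) '' T) = ∅ := by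
      apply interior_biUnion_finset_empty
      intro s _
      constructor
      · exact ((isCompact_range (bsum_continuous hv0' hsv)).image (continuous_add_left s)).isClosed
      · have him : (fun x : ℝ => s + x) '' T = (Homeomorph.addLeft s) '' T := rfl
        rw [him, ← Homeomorph.image_interior, hTint, Set.image_empty]
    have := interior_mono hcover
    rw [hbig, Set.subset_empty_iff] at this
    exact this
  have hgood : GoodSet (Set.range (bsum w)) := by
    refine ⟨⟨bsum w (fun _ => false), Set.mem_range_self _⟩,
      isCompact_range (bsum_continuous hw0' hsw),
      range_bsum_perfect hw0 hsw, hint⟩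
  rw [hEq]
  obtain ⟨e1⟩ := goodSet_homeo hgood
  obtain ⟨e2⟩ := goodSet_homeo goodSet_cantorSet
  exact ⟨e1.symm.trans e2⟩
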